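/- arXiv:0910.2477 — 4 statements merged into one kernel-verified Lean document; each statement's English description precedes it below -/
import Mathlib

section
/- Let V be a finite-dimensional real inner product space and q a positive semidefinite quadratic form on V with rank q = dim V − 1. Let v be a unit vector spanning the kernel of q and H = v^⊥. Then for any unit vector u ∈ V, det(q restricted to u^⊥) = ⟨u, v⟩² · det(q restricted to H), where the determinant of a quadratic form on a subspace is computed with respect to any orthonormal basis of that subspace. -/
open Matrix in
lemma aux_adjugate_inr {ι : Type*} [Fintype ι] [DecidableEq ι] {R : Type*} [CommRing R]
    (A : Matrix (ι ⊕ Unit) (ι ⊕ Unit) R) :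
    A.adjugate (Sum.inr ()) (Sum.inr ()) = (A.submatrix Sum.inl Sum.inl).det := by
  rw [Matrix.adjugate_apply]
  have h : A.updateRow (Sum.inr ()) (Pi.single (Sum.inr ()) 1) =
      Matrix.fromBlocks (A.submatrix Sum.inl Sum.inl)
        (Matrix.of fun i _ => A (Sum.inl i) (Sum.inr ())) 0 1 := by
    ext i j
    rcases i with i | i <;> rcases j with j | j <;>
      simp [Matrix.updateRow_apply, Pi.single_apply, Matrix.one_apply]
  rw [h, Matrix.det_fromBlocks_zero₂₁]
  simp [Matrix.det_unique]

lemma aux_extend {V : Type*} [NormedAddCommGroup V] [InnerProductSpace ℝ V]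
    [FiniteDimensional ℝ V] {ι : Type*} [Fintype ι] (u : V) (hu : ‖u‖ = 1)
    (b : OrthonormalBasis ι ℝ ((ℝ ∙ u)ᗮ)) :
    ∃ e : OrthonormalBasis (ι ⊕ Unit) ℝ V,
      (∀ i, e (Sum.inl i) = (b i : V)) ∧ e (Sum.inr ()) = u := by
  classical
  set f : (ι ⊕ Unit) → V := Sum.elim (fun i => (b i : V)) (fun _ => u) with hf
  have hbu : ∀ i, (inner ℝ ((b i : V)) u : ℝ) = 0 := by
    intro i
    exact (Submodule.mem_orthogonal' _ _).mp (b i).2 u (Submodule.mem_span_singleton_self u)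
  have hon : Orthonormal ℝ f := by
    rw [orthonormal_iff_ite]
    rintro (i | i) (j | j)
    · have := orthonormal_iff_ite.mp b.orthonormal i j
      simpa [hf, Submodule.coe_inner] using this
    · simpa [hf] using hbu i
    · have := hbu j
      rw [real_inner_comm] at this
      simpa [hf] using this
    · simp [hf, real_inner_self_eq_norm_sq, hu]
  have hsp : ⊤ ≤ Submodule.span ℝ (Set.range f) := by
    rw [← Submodule.sup_orthogonal_of_hasOrthogonalProjection (K := ℝ ∙ u)]
    apply sup_le
    · rw [Submodule.span_singleton_le_iff_mem]
      exact Submodule.subset_span ⟨Sum.inr (), rfl⟩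
    · have h1 : ((ℝ ∙ u)ᗮ : Submodule ℝ V) =
          Submodule.span ℝ (Set.range (fun i => (b i : V))) := by
        have h2 := b.toBasis.span_eq
        have h3 := congrArg (Submodule.map ((ℝ ∙ u)ᗮ).subtype) h2
        rw [Submodule.map_span, Submodule.map_top, Submodule.range_subtype] at h3
        have h4 : (⇑((Submodule.span ℝ {u})ᗮ).subtype '' Set.range ⇑b.toBasis) =
            Set.range (fun i => (b i : V)) := by
          ext x
          simp [OrthonormalBasis.coe_toBasis]
        rw [h4] at h3
        exact h3.symm
      rw [h1]
      apply Submodule.span_mono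
      rintro x ⟨i, rfl⟩
      exact ⟨Sum.inl i, rfl⟩
  refine ⟨OrthonormalBasis.mk hon hsp, fun i => ?_, ?_⟩ <;>
    simp [OrthonormalBasis.coe_mk, hf]

/-- Let `B` be a positive semidefinite symmetric bilinear form on a finite-dimensional real
inner product space `V`, whose kernel is spanned by a unit vector `v` (so the rank of the
associated quadratic form is `dim V − 1`).  Let `H = v^⊥`.  Then for any unit vector `u`,
the determinant of the restriction of the form to `u^⊥` (computed in any orthonormal basis)
equals `⟨u,v⟩²` times the determinant of the restriction to `H`. -/
theorem det_restriction_hyperplane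
    {V : Type*} [NormedAddCommGroup V] [InnerProductSpace ℝ V] [FiniteDimensional ℝ V]
    (B : V → V → ℝ)
    (hadd₁ : ∀ x y z : V, B (x + y) z = B x z + B y z)
    (hsmul₁ : ∀ (c : ℝ) (x y : V), B (c • x) y = c * B x y)
    (hsymm : ∀ x y : V, B x y = B y x)
    (hpsd : ∀ x : V, 0 ≤ B x x)
    (v : V) (hv : ‖v‖ = 1)
    (hker : ∀ x : V, B x x = 0 ↔ ∃ c : ℝ, x = c • v)
    (u : V) (hu : ‖u‖ = 1)
    (bU : OrthonormalBasis (Fin (Module.finrank ℝ V - 1)) ℝ ((ℝ ∙ u)ᗮ))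
    (bH : OrthonormalBasis (Fin (Module.finrank ℝ V - 1)) ℝ ((ℝ ∙ v)ᗮ)) :
    Matrix.det (Matrix.of fun i j => B (bU i : V) (bU j : V))
      = (inner ℝ u v : ℝ) ^ 2 * Matrix.det (Matrix.of fun i j => B (bH i : V) (bH j : V)) := by
  classical
  have hadd₂ : ∀ x y z : V, B x (y + z) = B x y + B x z := fun x y z => by
    rw [hsymm, hadd₁, hsymm y x, hsymm z x]
  have hsmul₂ : ∀ (c : ℝ) (x y : V), B x (c • y) = c * B x y := fun c x y => by
    rw [hsymm, hsmul₁, hsymm y x]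
  have hBvv : B v v = 0 := (hker v).2 ⟨1, (one_smul ℝ v).symm⟩
  -- B x v = 0 for all x
  have hBv : ∀ x : V, B x v = 0 := by
    intro x
    by_contra h
    set t : ℝ := -(B x x + 1) / (2 * B x v) with ht
    have h1 := hpsd (x + t • v)
    have h2 : B (x + t • v) (x + t • v) = B x x + 2 * t * B x v := by
      simp only [hadd₁, hadd₂, hsmul₁, hsmul₂, hsymm v x, hBvv]
      ring
    have h3 : 2 * t * B x v = -(B x x + 1) := by
      rw [ht]; field_simp
    rw [h2, h3] at h1
    linarith
  -- bundled bilinear form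
  set B' : LinearMap.BilinForm ℝ V := LinearMap.mk₂ ℝ B hadd₁ hsmul₁ hadd₂
    (fun c x y => hsmul₂ c x y) with hB'
  have hB'apply : ∀ x y : V, B' x y = B x y := fun _ _ => rfl
  obtain ⟨eU, heU, heU'⟩ := aux_extend u hu bU
  obtain ⟨eH, heH, heH'⟩ := aux_extend v hv bH
  set ri : Fin (Module.finrank ℝ V - 1) ⊕ Unit := Sum.inr () with hri
  set T := eH.toBasis.toMatrix eU.toBasis with hT
  have hTentry : ∀ i j, T i j = (inner ℝ (eH i) (eU j) : ℝ) := by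
    intro i j
    rw [hT, Module.Basis.toMatrix_apply, OrthonormalBasis.coe_toBasis,
      OrthonormalBasis.coe_toBasis_repr_apply, OrthonormalBasis.repr_apply_apply]
  have hTorth : T.transpose * T = 1 := by
    ext i j
    rw [Matrix.mul_apply]
    simp only [Matrix.transpose_apply, hTentry]
    have : ∀ k, (inner ℝ (eH k) (eU i) : ℝ) * (inner ℝ (eH k) (eU j) : ℝ)
        = (inner ℝ (eU i) (eH k) : ℝ) * (inner ℝ (eH k) (eU j) : ℝ) := fun k => by
      rw [real_inner_comm (eH k) (eU i)]
    rw [Finset.sum_congr rfl (fun k _ => this k), eH.sum_inner_mul_inner]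
    rw [orthonormal_iff_ite.mp eU.orthonormal i j, Matrix.one_apply]
  have hTT' : T * T.transpose = 1 := mul_eq_one_comm.mp hTorth
  have hdetT : T.det * T.det = 1 := by
    have := congrArg Matrix.det hTorth
    rwa [Matrix.det_mul, Matrix.det_transpose, Matrix.det_one] at this
  set MU : Matrix _ _ ℝ := LinearMap.BilinForm.toMatrix eU.toBasis B' with hMU
  set MH : Matrix _ _ ℝ := LinearMap.BilinForm.toMatrix eH.toBasis B' with hMH
  have hMUentry : ∀ i j, MU i j = B (eU i) (eU j) := by
    intro i j
    rw [hMU, LinearMap.BilinForm.toMatrix_apply, OrthonormalBasis.coe_toBasis, hB'apply]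
  have hMHentry : ∀ i j, MH i j = B (eH i) (eH j) := by
    intro i j
    rw [hMH, LinearMap.BilinForm.toMatrix_apply, OrthonormalBasis.coe_toBasis, hB'apply]
  have hchange : MU = T.transpose * MH * T :=
    (LinearMap.BilinForm.toMatrix_mul_basis_toMatrix eH.toBasis eU.toBasis B').symm
  -- adjugate transport
  have hadjT : T.adjugate = T.det • T.transpose := by
    calc T.adjugate = T.adjugate * (T * T.transpose) := by rw [hTT', Matrix.mul_one]
    _ = (T.adjugate * T) * T.transpose := by rw [Matrix.mul_assoc]
    _ = T.det • T.transpose := by rw [Matrix.adjugate_mul, Matrix.smul_mul, Matrix.one_mul]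
  have hadjTt : T.transpose.adjugate = T.det • T := by
    calc T.transpose.adjugate = T.transpose.adjugate * (T.transpose * T) := by rw [hTorth, Matrix.mul_one]
    _ = (T.transpose.adjugate * T.transpose) * T := by rw [Matrix.mul_assoc]
    _ = T.det • T := by
        rw [Matrix.adjugate_mul, Matrix.det_transpose, Matrix.smul_mul, Matrix.one_mul]
  have hadjMU : MU.adjugate = T.transpose * MH.adjugate * T := by
    rw [hchange, Matrix.adjugate_mul_distrib, Matrix.adjugate_mul_distrib, hadjT, hadjTt]
    simp only [Matrix.smul_mul, Matrix.mul_smul, smul_smul, hdetT, one_smul, Matrix.mul_assoc]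
  -- adjugate of MH is concentrated at (ri, ri)
  have hMHrow : ∀ j, MH ri j = 0 := by
    intro j
    rw [hMHentry, hri, heH', hsymm, hBv]
  have hMHcol : ∀ i, MH i ri = 0 := by
    intro i
    rw [hMHentry, hri, heH', hBv]
  have hadjMH0 : ∀ i j, (i ≠ ri ∨ j ≠ ri) → MH.adjugate i j = 0 := by
    rintro i j hij
    rw [Matrix.adjugate_apply]
    by_cases hi : i = ri
    · -- then j ≠ ri; row ri of updated matrix is zero
      have hj : j ≠ ri := by tauto
      apply Matrix.det_eq_zero_of_row_eq_zero ri
      intro k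
      rw [Matrix.updateRow_apply]
      split
      · next h => exact absurd h.symm hj
      · exact hMHrow k
    · -- i ≠ ri : column ri of updated matrix is zero
      apply Matrix.det_eq_zero_of_column_eq_zero ri
      intro k
      rw [Matrix.updateRow_apply]
      split
      · simp [Pi.single_apply, Ne.symm hi, hi]
      · exact hMHcol k
  -- compute the (ri, ri) entry
  have hentry : (T.transpose * MH.adjugate * T) ri ri = T ri ri * MH.adjugate ri ri * T ri ri := by
    rw [Matrix.mul_apply]
    rw [Finset.sum_eq_single ri]
    · rw [Matrix.mul_apply, Finset.sum_eq_single ri]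
      · rw [Matrix.transpose_apply]
      · intro k _ hk
        rw [hadjMH0 k ri (Or.inl hk), mul_zero]
      · intro hri'; exact absurd (Finset.mem_univ ri) hri'
    · intro l _ hl
      have : (T.transpose * MH.adjugate) ri l = 0 := by
        rw [Matrix.mul_apply]
        apply Finset.sum_eq_zero
        intro k _
        rw [hadjMH0 k l (Or.inr hl), mul_zero]
      rw [this, zero_mul]
    · intro hri'; exact absurd (Finset.mem_univ ri) hri'
  -- identify statement matrices with submatrices
  have hQU : (Matrix.of fun i j => B (bU i : V) (bU j : V)) = MU.submatrix Sum.inl Sum.inl := by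
    ext i j
    rw [Matrix.of_apply, Matrix.submatrix_apply, hMUentry, heU, heU]
  have hQH : (Matrix.of fun i j => B (bH i : V) (bH j : V)) = MH.submatrix Sum.inl Sum.inl := by
    ext i j
    rw [Matrix.of_apply, Matrix.submatrix_apply, hMHentry, heH, heH]
  have hTrr : T ri ri = (inner ℝ v u : ℝ) := by
    rw [hTentry, hri, heH', heU']
  rw [hQU, hQH, ← aux_adjugate_inr, ← aux_adjugate_inr, ← hri, hadjMU, hentry, hTrr]
  rw [real_inner_comm v u]
  ring
end

section
/- Let q₀(s,t) = (1/2)·Σ_{j,k} (s_j + t_k)² on ℝ^{m+n}, let u = (1,…,1; −1,…,−1), and let H = u^⊥. Then the determinant of the restriction of q₀ to H equals (m/2)^{n−1} · (n/2)^{m−1} · (m+n)/2. -/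
open Finset Matrix

lemma aux_det_block (k : ℕ) (a : ℝ) (ha : a ≠ 0) :
    Matrix.det (Matrix.of fun i j : Fin k => (a * (if i = j then (1:ℝ) else 0) + 1) / 2)
      = (a / 2) ^ k * (1 + k / a) := by
  have h : (Matrix.of fun i j : Fin k => (a * (if i = j then (1:ℝ) else 0) + 1) / 2)
      = (a / 2) • (1 + Matrix.replicateCol Unit (fun _ => a⁻¹) * Matrix.replicateRow Unit (fun _ => (1:ℝ))) := by
    ext i j
    simp only [Matrix.of_apply, Matrix.smul_apply, Matrix.add_apply, Matrix.one_apply,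
      Matrix.mul_apply, Matrix.replicateCol_apply, Matrix.replicateRow_apply, Finset.univ_unique,
      Finset.sum_singleton, smul_eq_mul]
    split_ifs
    · field_simp
    · field_simp
  rw [h, Matrix.det_smul, Matrix.det_one_add_replicateCol_mul_replicateRow]
  simp [dotProduct, Finset.card_univ, mul_comm, div_eq_mul_inv]

lemma aux_sum_block {k : ℕ} (c : ℝ) (p q : Fin k → ℝ) :
    (∑ j, ∑ j', p j * ((c * (if j = j' then (1:ℝ) else 0) + 1) / 2) * q j')
      = (c / 2) * ∑ j, p j * q j + (1 / 2) * (∑ j, p j) * (∑ j, q j) := by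
  have h : ∀ j j' : Fin k, p j * ((c * (if j = j' then (1:ℝ) else 0) + 1) / 2) * q j'
      = (if j = j' then (c / 2) * (p j * q j') else 0) + (1 / 2) * (p j * q j') := by
    intro j j'; split_ifs <;> ring
  simp only [h, Finset.sum_add_distrib, Finset.sum_ite_eq, Finset.mem_univ, if_true]
  have h2 : (∑ x : Fin k, ∑ y : Fin k, 1 / 2 * (p x * q y))
      = 1 / 2 * ((∑ j, p j) * (∑ j, q j)) := by
    rw [Finset.sum_mul_sum]
    simp [Finset.mul_sum]
  rw [h2, ← Finset.mul_sum]
  ring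

lemma aux_cross {k l : ℕ} (p q : Fin k → ℝ) (p' q' : Fin l → ℝ) :
    (∑ j, ∑ j', (p j + p' j') * (q j + q' j'))
      = l * ∑ j, p j * q j + (∑ j, p j) * (∑ j', q' j') + (∑ j', p' j') * (∑ j, q j)
        + k * ∑ j', p' j' * q' j' := by
  have h : ∀ (j : Fin k) (j' : Fin l), (p j + p' j') * (q j + q' j')
      = p j * q j + p j * q' j' + p' j' * q j + p' j' * q' j' := fun _ _ => by ring
  have h3 : (∑ x : Fin k, ∑ y : Fin l, p' y * q x) = ∑ y : Fin l, ∑ x : Fin k, p' y * q x :=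
    Finset.sum_comm
  simp only [h, Finset.sum_add_distrib, Finset.sum_const, Finset.card_univ, Fintype.card_fin,
    nsmul_eq_mul]
  rw [h3, Finset.sum_mul_sum, Finset.sum_mul_sum, ← Finset.mul_sum]

lemma aux_final (m n : ℕ) (hm : 1 ≤ m) (hn : 1 ≤ n) :
    ((m:ℝ) / 2) ^ (n - 1) * ((n:ℝ) / 2) ^ (m - 1) * (((m:ℝ) + n) / 2) * (((m:ℝ) + n) / 2)
      = ((n:ℝ) / 2) ^ m * (1 + (m:ℝ) / n) * (((m:ℝ) / 2) ^ n * (1 + (n:ℝ) / m)) := by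
  obtain ⟨m', rfl⟩ : ∃ m', m = m' + 1 := ⟨m - 1, by omega⟩
  obtain ⟨n', rfl⟩ : ∃ n', n = n' + 1 := ⟨n - 1, by omega⟩
  simp only [Nat.add_sub_cancel]
  have hm1 : ((m':ℝ) + 1) ≠ 0 := by positivity
  have hn1 : ((n':ℝ) + 1) ≠ 0 := by positivity
  push_cast
  rw [pow_succ, pow_succ]
  field_simp
  ring

set_option maxHeartbeats 1000000 in
/-- Let `q₀(s,t) = (1/2)Σ_{j,k}(s_j+t_k)²` on `ℝ^{m+n}` with associated symmetric bilinear
form `B`, let `u = (1,…,1; −1,…,−1)` and `H = u^⊥`.  Then the determinant of the matrix of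
the restriction of `q₀` to `H` in any orthonormal basis of `H` equals
`(m/2)^{n−1}·(n/2)^{m−1}·(m+n)/2`. -/
theorem det_q0_restricted (m n : ℕ) (hm : 1 ≤ m) (hn : 1 ≤ n)
    (u : EuclideanSpace ℝ (Fin m ⊕ Fin n))
    (hu : u = WithLp.toLp 2 (fun i => Sum.elim (fun _ => (1 : ℝ)) (fun _ => (-1 : ℝ)) i))
    (B : EuclideanSpace ℝ (Fin m ⊕ Fin n) → EuclideanSpace ℝ (Fin m ⊕ Fin n) → ℝ)
    (hB : ∀ x y, B x y = (1 / 2 : ℝ) * ∑ j, ∑ k,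
      (x (Sum.inl j) + x (Sum.inr k)) * (y (Sum.inl j) + y (Sum.inr k)))
    (b : OrthonormalBasis (Fin (m + n - 1)) ℝ ((ℝ ∙ u)ᗮ)) :
    Matrix.det (Matrix.of fun i j => B (b i : EuclideanSpace ℝ (Fin m ⊕ Fin n))
        (b j : EuclideanSpace ℝ (Fin m ⊕ Fin n)))
      = ((m : ℝ) / 2) ^ (n - 1) * ((n : ℝ) / 2) ^ (m - 1) * (((m : ℝ) + n) / 2) := by
  classical
  have hm' : (m:ℝ) ≠ 0 := Nat.cast_ne_zero.mpr (by omega)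
  have hn' : (n:ℝ) ≠ 0 := Nat.cast_ne_zero.mpr (by omega)
  have hmnpos : (0:ℝ) < (m:ℝ) + (n:ℝ) := by
    have h1 : (0:ℝ) < (m:ℝ) := by exact_mod_cast Nat.pos_of_ne_zero (by omega)
    have h2 : (0:ℝ) ≤ (n:ℝ) := Nat.cast_nonneg n
    linarith
  set v : (Fin m ⊕ Fin n) → ℝ := fun x => Sum.elim (fun _ => (1:ℝ)) (fun _ => (-1:ℝ)) x with hv
  have huv : ∀ x, u x = v x := by intro x; subst hu; rfl
  set r : ℝ := (Real.sqrt ((m:ℝ) + n))⁻¹ with hrdef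
  have hr2 : r * r * ((m:ℝ) + n) = 1 := by
    rw [hrdef, ← mul_inv, Real.mul_self_sqrt hmnpos.le]
    exact inv_mul_cancel₀ (ne_of_gt hmnpos)
  -- orthonormality data, expressed as coordinate sums
  have hb_on : ∀ i j, (∑ x, (b i : EuclideanSpace ℝ (Fin m ⊕ Fin n)) x
      * (b j : EuclideanSpace ℝ (Fin m ⊕ Fin n)) x) = if i = j then 1 else 0 := by
    intro i j
    have h := (orthonormal_iff_ite.mp b.orthonormal) i j
    rw [Submodule.coe_inner] at h
    simp only [PiLp.inner_apply, RCLike.inner_apply, conj_trivial] at h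
    rw [← h]
    exact Finset.sum_congr rfl fun x _ => mul_comm _ _
  have hbu : ∀ i, (∑ x, v x * (b i : EuclideanSpace ℝ (Fin m ⊕ Fin n)) x) = 0 := by
    intro i
    have h : (inner ℝ u ((b i : EuclideanSpace ℝ (Fin m ⊕ Fin n))) : ℝ) = 0 :=
      Submodule.mem_orthogonal_singleton_iff_inner_right.mp (b i).2
    simp only [PiLp.inner_apply, RCLike.inner_apply, conj_trivial] at h
    rw [← h]
    exact Finset.sum_congr rfl fun x _ => by rw [huv, mul_comm]
  have hvv : (∑ x, v x * v x) = (m:ℝ) + n := by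
    rw [Fintype.sum_sum_type]
    simp [hv, Finset.card_univ]
  set cu : EuclideanSpace ℝ (Fin m ⊕ Fin n) := WithLp.toLp 2 (fun x => r * v x) with hcu
  set c : (Fin (m + n - 1) ⊕ Unit) → EuclideanSpace ℝ (Fin m ⊕ Fin n) :=
    Sum.elim (fun i => (b i : EuclideanSpace ℝ (Fin m ⊕ Fin n))) (fun _ => cu) with hc
  have horth : ∀ i j, (∑ x, c i x * c j x) = if i = j then 1 else 0 := by
    rintro (i | i) (j | j)
    · simpa [hc] using hb_on i j
    · simp only [hc, Sum.elim_inl, Sum.elim_inr, hcu, PiLp.toLp_apply]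
      have h4 : (∑ x, (b i : EuclideanSpace ℝ (Fin m ⊕ Fin n)) x * (r * v x))
          = r * ∑ x, v x * (b i : EuclideanSpace ℝ (Fin m ⊕ Fin n)) x := by
        rw [Finset.mul_sum]; exact Finset.sum_congr rfl fun x _ => by ring
      rw [h4, hbu, mul_zero]
      simp
    · simp only [hc, Sum.elim_inl, Sum.elim_inr, hcu, PiLp.toLp_apply]
      have h4 : (∑ x, (r * v x) * (b j : EuclideanSpace ℝ (Fin m ⊕ Fin n)) x)
          = r * ∑ x, v x * (b j : EuclideanSpace ℝ (Fin m ⊕ Fin n)) x := by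
        rw [Finset.mul_sum]; exact Finset.sum_congr rfl fun x _ => by ring
      rw [h4, hbu, mul_zero]
      simp
    · simp only [hc, Sum.elim_inr, hcu, PiLp.toLp_apply]
      have h4 : (∑ x, (r * v x) * (r * v x)) = r * r * ∑ x, v x * v x := by
        rw [Finset.mul_sum]; exact Finset.sum_congr rfl fun x _ => by ring
      rw [h4, hvv, hr2]
      simp
  -- the block-diagonal matrix Ā = A + ½ v vᵀ
  set D1 : Matrix (Fin m) (Fin m) ℝ :=
    Matrix.of (fun i j => ((n:ℝ) * (if i = j then 1 else 0) + 1) / 2) with hD1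
  set D2 : Matrix (Fin n) (Fin n) ℝ :=
    Matrix.of (fun i j => ((m:ℝ) * (if i = j then 1 else 0) + 1) / 2) with hD2
  set Abar : Matrix (Fin m ⊕ Fin n) (Fin m ⊕ Fin n) ℝ := Matrix.fromBlocks D1 0 0 D2 with hAbar
  have key : ∀ f g : EuclideanSpace ℝ (Fin m ⊕ Fin n),
      (∑ x, ∑ y, f x * Abar x y * g y)
        = B f g + (1/2) * (∑ x, v x * f x) * (∑ x, v x * g x) := by
    intro f g
    have hvf : ∀ h : EuclideanSpace ℝ (Fin m ⊕ Fin n),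
        (∑ x, v x * h x) = (∑ j, h (Sum.inl j)) - (∑ k, h (Sum.inr k)) := by
      intro h
      rw [Fintype.sum_sum_type]
      simp [hv, sub_eq_add_neg]
    rw [hB, hvf f, hvf g, Fintype.sum_sum_type]
    simp only [Fintype.sum_sum_type, hAbar, Matrix.fromBlocks_apply₁₁, Matrix.fromBlocks_apply₁₂,
      Matrix.fromBlocks_apply₂₁, Matrix.fromBlocks_apply₂₂, Matrix.zero_apply, hD1, hD2,
      Matrix.of_apply, mul_zero, zero_mul, Finset.sum_const_zero, add_zero, zero_add]
    rw [aux_sum_block, aux_sum_block, aux_cross]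
    ring
  -- B vanishes against cu
  have hBcu : ∀ z : EuclideanSpace ℝ (Fin m ⊕ Fin n), B z cu = 0 := by
    intro z
    rw [hB]
    have h4 : ∀ (j : Fin m) (k : Fin n),
        (z (Sum.inl j) + z (Sum.inr k)) * (cu (Sum.inl j) + cu (Sum.inr k)) = 0 := by
      intro j k
      have h0 : cu (Sum.inl j) + cu (Sum.inr k) = 0 := by
        simp only [hcu, hv, PiLp.toLp_apply, Sum.elim_inl, Sum.elim_inr]; ring
      rw [h0, mul_zero]
    simp [h4]
  have hBcu' : ∀ z : EuclideanSpace ℝ (Fin m ⊕ Fin n), B cu z = 0 := by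
    intro z
    rw [hB]
    have h4 : ∀ (j : Fin m) (k : Fin n),
        (cu (Sum.inl j) + cu (Sum.inr k)) * (z (Sum.inl j) + z (Sum.inr k)) = 0 := by
      intro j k
      have h0 : cu (Sum.inl j) + cu (Sum.inr k) = 0 := by
        simp only [hcu, hv, PiLp.toLp_apply, Sum.elim_inl, Sum.elim_inr]; ring
      rw [h0, zero_mul]
    simp [h4]
  have hvcu : (∑ x, v x * cu x) = r * ((m:ℝ) + n) := by
    have h4 : ∀ x, v x * cu x = r * (v x * v x) := by
      intro x; simp only [hcu, PiLp.toLp_apply]; ring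
    simp only [h4]
    rw [← Finset.mul_sum, hvv]
  -- the conjugated block matrix
  set F : Matrix ((Fin (m + n - 1)) ⊕ Unit) ((Fin (m + n - 1)) ⊕ Unit) ℝ :=
    Matrix.fromBlocks
      (Matrix.of fun i j => B (b i : EuclideanSpace ℝ (Fin m ⊕ Fin n))
        (b j : EuclideanSpace ℝ (Fin m ⊕ Fin n))) 0 0
      (Matrix.of fun _ _ => ((m:ℝ) + n) / 2) with hF
  have hkeyF : ∀ i j, (∑ x, ∑ y, c i x * Abar x y * c j y) = F i j := by
    rintro (i | i) (j | j)
    · rw [key]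
      simp only [hc, Sum.elim_inl]
      rw [hbu, hbu]
      simp [hF]
    · rw [key]
      simp only [hc, Sum.elim_inl, Sum.elim_inr]
      rw [hbu, hBcu]
      simp [hF]
    · rw [key]
      simp only [hc, Sum.elim_inl, Sum.elim_inr]
      rw [hbu, hBcu']
      simp [hF]
    · rw [key]
      simp only [hc, Sum.elim_inr]
      rw [hvcu, hBcu]
      simp only [hF, Matrix.fromBlocks_apply₂₂, Matrix.of_apply, zero_add]
      linear_combination (((m:ℝ) + n) / 2) * hr2
  -- orthogonal change of coordinates
  have hcard : Fintype.card (Fin m ⊕ Fin n) = Fintype.card ((Fin (m + n - 1)) ⊕ Unit) := by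
    simp only [Fintype.card_sum, Fintype.card_fin, Fintype.card_unit]
    omega
  set e : (Fin m ⊕ Fin n) ≃ ((Fin (m + n - 1)) ⊕ Unit) := Fintype.equivOfCardEq hcard with he
  set P : Matrix (Fin m ⊕ Fin n) (Fin m ⊕ Fin n) ℝ := Matrix.of fun x i => c (e i) x with hP
  have hPtP : Pᵀ * P = 1 := by
    ext i j
    simp only [Matrix.mul_apply, Matrix.transpose_apply, hP, Matrix.of_apply]
    rw [horth]
    simp [Matrix.one_apply, EmbeddingLike.apply_eq_iff_eq]
  have hdetP : P.det * P.det = 1 := by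
    have h := congrArg Matrix.det hPtP
    rwa [Matrix.det_mul, Matrix.det_transpose, Matrix.det_one] at h
  have hPAP : Pᵀ * Abar * P = F.submatrix e e := by
    ext i j
    simp only [Matrix.mul_apply, Matrix.transpose_apply, hP, Matrix.of_apply,
      Matrix.submatrix_apply, Finset.sum_mul]
    rw [Finset.sum_comm]
    exact hkeyF (e i) (e j)
  -- determinant bookkeeping
  have h1 : (Pᵀ * Abar * P).det = P.det * Abar.det * P.det := by
    rw [Matrix.det_mul, Matrix.det_mul, Matrix.det_transpose]
  have h2 : (F.submatrix e e).det = F.det := Matrix.det_submatrix_equiv_self e F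
  have h3 : F.det = (Matrix.of fun i j => B (b i : EuclideanSpace ℝ (Fin m ⊕ Fin n))
      (b j : EuclideanSpace ℝ (Fin m ⊕ Fin n))).det * (((m:ℝ) + n) / 2) := by
    rw [hF, Matrix.det_fromBlocks_zero₂₁]
    congr 1
    rw [Matrix.det_unique]
    simp
  have h5 : D1.det = ((n:ℝ) / 2) ^ m * (1 + (m:ℝ) / n) := by
    rw [hD1]; exact aux_det_block m (n:ℝ) hn'
  have h6 : D2.det = ((m:ℝ) / 2) ^ n * (1 + (n:ℝ) / m) := by
    rw [hD2]; exact aux_det_block n (m:ℝ) hm'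
  have h4 : Abar.det = ((n:ℝ) / 2) ^ m * (1 + (m:ℝ) / n) * (((m:ℝ) / 2) ^ n * (1 + (n:ℝ) / m)) := by
    rw [hAbar, Matrix.det_fromBlocks_zero₂₁, h5, h6]
  have hAF : F.det = Abar.det := by
    calc F.det = (F.submatrix e e).det := h2.symm
      _ = (Pᵀ * Abar * P).det := by rw [hPAP]
      _ = P.det * Abar.det * P.det := h1
      _ = Abar.det := by linear_combination Abar.det * hdetP
  have final : (Matrix.of fun i j => B (b i : EuclideanSpace ℝ (Fin m ⊕ Fin n))
      (b j : EuclideanSpace ℝ (Fin m ⊕ Fin n))).det * (((m:ℝ) + n) / 2)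
      = ((n:ℝ) / 2) ^ m * (1 + (m:ℝ) / n) * (((m:ℝ) / 2) ^ n * (1 + (n:ℝ) / m)) := by
    rw [← h3, hAF, h4]
  have hne : (((m:ℝ) + n) / 2) ≠ 0 := by
    have : (0:ℝ) < ((m:ℝ) + n) / 2 := by linarith
    exact ne_of_gt this
  apply mul_right_cancel₀ hne
  rw [final]
  exact (aux_final m n hm hn).symm
end

section
/- Let M : ℝ^{m+n} → ℝ^{mn} be the linear map sending (s₁,…,s_m; t₁,…,t_n) to the vector with entries s_j + t_k for 1 ≤ j ≤ m, 1 ≤ k ≤ n. Let H ⊂ ℝ^{m+n} be the hyperplane defined by Σ_j s_j = Σ_k t_k. Then ‖M x‖² ≥ min(m, n) · ‖x‖² for all x ∈ H. -/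
/-- Let `M : ℝ^{m+n} → ℝ^{mn}` send `(s,t)` to `(s_j + t_k)_{j,k}`, and let `H` be the
hyperplane `Σ_j s_j = Σ_k t_k`.  Then `‖Mx‖² ≥ min(m,n)·‖x‖²` for all `x ∈ H`, i.e.
`Σ_{j,k} (s_j + t_k)² ≥ min(m,n)·(Σ_j s_j² + Σ_k t_k²)`. -/
theorem M_norm_lower_bound (m n : ℕ) (hm : 0 < m) (hn : 0 < n)
    (s : Fin m → ℝ) (t : Fin n → ℝ) (h : ∑ j, s j = ∑ k, t k) :
    (min m n : ℝ) * ((∑ j, (s j) ^ 2) + ∑ k, (t k) ^ 2)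
      ≤ ∑ j, ∑ k, (s j + t k) ^ 2 := by
  have hrow : ∀ j : Fin m, ∑ k, (s j + t k) ^ 2
      = n * (s j) ^ 2 + 2 * s j * (∑ k, t k) + ∑ k, (t k) ^ 2 := by
    intro j
    have : ∑ k, (s j + t k) ^ 2
        = ∑ k : Fin n, ((s j) ^ 2 + 2 * s j * t k + (t k) ^ 2) := by
      apply Finset.sum_congr rfl; intro k _; ring
    rw [this, Finset.sum_add_distrib, Finset.sum_add_distrib, Finset.sum_const,
      ← Finset.mul_sum, Finset.card_univ, Fintype.card_fin, nsmul_eq_mul, sq]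
  have expand : ∑ j, ∑ k, (s j + t k) ^ 2
      = n * (∑ j, (s j) ^ 2) + 2 * (∑ j, s j) * (∑ k, t k) + m * (∑ k, (t k) ^ 2) := by
    simp only [hrow]
    rw [Finset.sum_add_distrib, Finset.sum_add_distrib, Finset.sum_const,
      Finset.card_univ, Fintype.card_fin, nsmul_eq_mul, ← Finset.mul_sum,
      ← Finset.sum_mul, ← Finset.mul_sum]
  rw [expand, ← h]
  have hmn : (min m n : ℝ) ≤ n := by
    have := min_le_right m n
    exact_mod_cast Nat.cast_le.mpr this
  have hmm : (min m n : ℝ) ≤ m := by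
    exact_mod_cast Nat.cast_le.mpr (min_le_left m n)
  have h1 : (0:ℝ) ≤ ∑ j, (s j) ^ 2 := Finset.sum_nonneg fun j _ => sq_nonneg _
  have h2 : (0:ℝ) ≤ ∑ k, (t k) ^ 2 := Finset.sum_nonneg fun k _ => sq_nonneg _
  nlinarith [mul_le_mul_of_nonneg_right hmn h1, mul_le_mul_of_nonneg_right hmm h2, sq_nonneg (∑ j, s j)]
end

section
/- Fix margins R, C and the typical matrix Z = (ζ_{jk}) maximizing g on P(R,C), and suppose δτ ≤ ζ_{jk} ≤ τ for all j, k with 0 < δ < 1/2, τ > 1. Let 0 < ε < 1/2 and let R', C' be margins with (1−ε)r_j ≤ r_j' ≤ r_j and (1−ε)c_k ≤ c_k' ≤ c_k and Σ r_j' = Σ c_k', with typical matrix X for (R',C'). Then g((1−ε)Z) ≤ g(X) ≤ g(Z). -/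
/-- The entropy-like functional `g(X) = Σ_{j,k}((x_{jk}+1)ln(x_{jk}+1) − x_{jk}ln x_{jk})`
of a matrix. -/
noncomputable def gFun {m n : ℕ} (X : Matrix (Fin m) (Fin n) ℝ) : ℝ :=
  ∑ j, ∑ k, ((X j k + 1) * Real.log (X j k + 1) - X j k * Real.log (X j k))

/-- Membership in the transportation polytope `P(R,C)`. -/
def inTP {m n : ℕ} (R : Fin m → ℝ) (C : Fin n → ℝ) (X : Matrix (Fin m) (Fin n) ℝ) : Prop :=
  (∀ j k, 0 ≤ X j k) ∧ (∀ j, ∑ k, X j k = R j) ∧ (∀ k, ∑ j, X j k = C k)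

noncomputable def fEnt (x : ℝ) : ℝ := (x + 1) * Real.log (x + 1) - x * Real.log x

lemma fEnt_mono : MonotoneOn fEnt (Set.Ici 0) := by
  have hc : ContinuousOn fEnt (Set.Ici 0) := by
    have h1 : Continuous fun x : ℝ => (x + 1) * Real.log (x + 1) :=
      Real.continuous_mul_log.comp (continuous_id.add continuous_const)
    exact (h1.sub Real.continuous_mul_log).continuousOn
  have hd : ∀ x ∈ interior (Set.Ici (0:ℝ)), 0 < deriv fEnt x := by
    intro x hx
    rw [interior_Ici] at hx
    have hx0 : (0:ℝ) < x := hx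
    have h1 : HasDerivAt (fun y : ℝ => (y + 1) * Real.log (y + 1))
        ((Real.log (x + 1) + 1) * 1) x :=
      (Real.hasDerivAt_mul_log (by linarith)).comp x ((hasDerivAt_id x).add_const 1)
    have h2 : HasDerivAt (fun y : ℝ => y * Real.log y) (Real.log x + 1) x :=
      Real.hasDerivAt_mul_log hx0.ne'
    have h : HasDerivAt fEnt ((Real.log (x + 1) + 1) * 1 - (Real.log x + 1)) x := h1.sub h2
    rw [h.deriv]
    have := Real.log_lt_log hx0 (by linarith : x < x + 1)
    linarith
  exact (strictMonoOn_of_deriv_pos (convex_Ici 0) hc hd).monotoneOn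

lemma gFun_le {m n : ℕ} {A B : Matrix (Fin m) (Fin n) ℝ}
    (hA : ∀ j k, 0 ≤ A j k) (hAB : ∀ j k, A j k ≤ B j k) : gFun A ≤ gFun B := by
  unfold gFun
  refine Finset.sum_le_sum fun j _ => Finset.sum_le_sum fun k _ => ?_
  exact fEnt_mono (hA j k) (Set.mem_Ici.mpr ((hA j k).trans (hAB j k))) (hAB j k)

lemma exists_correction {m n : ℕ} (a : Fin m → ℝ) (b : Fin n → ℝ)
    (ha : ∀ j, 0 ≤ a j) (hb : ∀ k, 0 ≤ b k) (hab : ∑ j, a j = ∑ k, b k) :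
    ∃ D : Matrix (Fin m) (Fin n) ℝ, (∀ j k, 0 ≤ D j k) ∧
      (∀ j, ∑ k, D j k = a j) ∧ (∀ k, ∑ j, D j k = b k) := by
  set S := ∑ j, a j with hS
  have hS0 : 0 ≤ S := Finset.sum_nonneg fun j _ => ha j
  refine ⟨fun j k => a j * b k / S, fun j k => div_nonneg (mul_nonneg (ha j) (hb k)) hS0, ?_, ?_⟩
  · intro j
    rcases eq_or_ne S 0 with h0 | h0
    · have haj : a j = 0 :=
        (Finset.sum_eq_zero_iff_of_nonneg (fun i _ => ha i)).mp (hS ▸ h0) j (Finset.mem_univ j)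
      simp [haj]
    · rw [← Finset.sum_div, ← Finset.mul_sum, ← hab, mul_div_assoc, div_self h0, mul_one]
  · intro k
    rcases eq_or_ne S 0 with h0 | h0
    · have hbk : b k = 0 :=
        (Finset.sum_eq_zero_iff_of_nonneg (fun i _ => hb i)).mp (hab ▸ h0) k
          (Finset.mem_univ k)
      simp [hbk]
    · rw [← Finset.sum_div, ← Finset.sum_mul, ← hS, mul_comm, mul_div_assoc, div_self h0, mul_one]

/-- Let `Z` be the typical matrix of margins `(R,C)` with `δτ ≤ ζ_{jk} ≤ τ`,
`0 < δ < 1/2`, `τ > 1`.  Let `0 < ε < 1/2` and let `(R',C')` be margins with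
`(1−ε)r_j ≤ r_j' ≤ r_j`, `(1−ε)c_k ≤ c_k' ≤ c_k` and equal total sums, with typical
matrix `X`.  Then `g((1−ε)Z) ≤ g(X) ≤ g(Z)`. -/

theorem g_typical_matrix_perturbed_margins (m n : ℕ)
    (R : Fin m → ℝ) (C : Fin n → ℝ) (hRC : ∑ j, R j = ∑ k, C k)
    (Z : Matrix (Fin m) (Fin n) ℝ)
    (hZmem : inTP R C Z)
    (hZmax : ∀ Y, inTP R C Y → gFun Y ≤ gFun Z)
    (δ τ : ℝ) (hδ0 : 0 < δ) (hδ : δ < 1 / 2) (hτ : 1 < τ)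
    (hζ : ∀ j k, δ * τ ≤ Z j k ∧ Z j k ≤ τ)
    (ε : ℝ) (hε0 : 0 < ε) (hε : ε < 1 / 2)
    (R' : Fin m → ℝ) (C' : Fin n → ℝ)
    (hR' : ∀ j, (1 - ε) * R j ≤ R' j ∧ R' j ≤ R j)
    (hC' : ∀ k, (1 - ε) * C k ≤ C' k ∧ C' k ≤ C k)
    (hRC' : ∑ j, R' j = ∑ k, C' k)
    (X : Matrix (Fin m) (Fin n) ℝ)
    (hXmem : inTP R' C' X)
    (hXmax : ∀ Y, inTP R' C' Y → gFun Y ≤ gFun X) :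
    gFun ((1 - ε) • Z) ≤ gFun X ∧ gFun X ≤ gFun Z := by
  have hε1 : (0:ℝ) ≤ 1 - ε := by linarith
  obtain ⟨hZ0, hZr, hZc⟩ := hZmem
  obtain ⟨hX0, hXr, hXc⟩ := hXmem
  constructor
  · -- lower bound: (1-ε)Z plus a correction lies in P(R',C')
    obtain ⟨D, hD0, hDr, hDc⟩ := exists_correction (fun j => R' j - (1 - ε) * R j)
      (fun k => C' k - (1 - ε) * C k)
      (fun j => sub_nonneg.mpr (hR' j).1) (fun k => sub_nonneg.mpr (hC' k).1)
      (by rw [Finset.sum_sub_distrib, Finset.sum_sub_distrib, ← Finset.mul_sum,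
        ← Finset.mul_sum, hRC, hRC'])
    set Y : Matrix (Fin m) (Fin n) ℝ := fun j k => (1 - ε) * Z j k + D j k with hY
    have hYmem : inTP R' C' Y := by
      refine ⟨fun j k => add_nonneg (mul_nonneg hε1 (hZ0 j k)) (hD0 j k),
        fun j => ?_, fun k => ?_⟩
      · show ∑ k, ((1 - ε) * Z j k + D j k) = R' j
        rw [Finset.sum_add_distrib, ← Finset.mul_sum, hZr j, hDr j]; ring
      · show ∑ j, ((1 - ε) * Z j k + D j k) = C' k
        rw [Finset.sum_add_distrib, ← Finset.mul_sum, hZc k, hDc k]; ring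
    have h1 : gFun ((1 - ε) • Z) ≤ gFun Y := by
      apply gFun_le
      · intro j k
        show (0:ℝ) ≤ (1 - ε) * Z j k
        exact mul_nonneg hε1 (hZ0 j k)
      · intro j k
        show (1 - ε) * Z j k ≤ (1 - ε) * Z j k + D j k
        exact le_add_of_nonneg_right (hD0 j k)
    exact h1.trans (hXmax Y hYmem)
  · -- upper bound: X plus a correction lies in P(R,C)
    obtain ⟨D, hD0, hDr, hDc⟩ := exists_correction (fun j => R j - R' j)
      (fun k => C k - C' k)
      (fun j => sub_nonneg.mpr (hR' j).2) (fun k => sub_nonneg.mpr (hC' k).2)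
      (by rw [Finset.sum_sub_distrib, Finset.sum_sub_distrib, hRC, hRC'])
    set Y : Matrix (Fin m) (Fin n) ℝ := fun j k => X j k + D j k with hY
    have hYmem : inTP R C Y := by
      refine ⟨fun j k => add_nonneg (hX0 j k) (hD0 j k), fun j => ?_, fun k => ?_⟩
      · show ∑ k, (X j k + D j k) = R j
        rw [Finset.sum_add_distrib, hXr j, hDr j]; ring
      · show ∑ j, (X j k + D j k) = C k
        rw [Finset.sum_add_distrib, hXc k, hDc k]; ring
    have h1 : gFun X ≤ gFun Y :=
      gFun_le hX0 (fun j k => le_add_of_nonneg_right (hD0 j k))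
    exact h1.trans (hZmax Y hYmem)
end
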